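/- Let (X,ρ,W) be a uniformly convex hyperbolic space with modulus of uniform convexity η. Then for any r > 0, ε ∈ (0,2], λ ∈ [0,1], and a,x,y ∈ X with ρ(x,a) ≤ r, ρ(y,a) ≤ r, ρ(x,y) ≥ εr, one has ρ((1−λ)x ⊕ λy, a) ≤ (1 − 2λ(1−λ)η(r,ε))·r. -/

import Mathlib

theorem stmt_3
    {X : Type*} [MetricSpace X]
    (W : X → X → ℝ → X)
    (W1 : ∀ x y z : X, ∀ l : ℝ, l ∈ Set.Icc (0:ℝ) 1 →
      dist z (W x y l) ≤ (1 - l) * dist z x + l * dist z y)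
    (W2 : ∀ x y : X, ∀ l l' : ℝ, l ∈ Set.Icc (0:ℝ) 1 → l' ∈ Set.Icc (0:ℝ) 1 →
      dist (W x y l) (W x y l') = |l - l'| * dist x y)
    (W3 : ∀ x y : X, ∀ l : ℝ, l ∈ Set.Icc (0:ℝ) 1 → W x y l = W y x (1 - l))
    (W4 : ∀ x y z w : X, ∀ l : ℝ, l ∈ Set.Icc (0:ℝ) 1 →
      dist (W x z l) (W y w l) ≤ (1 - l) * dist x y + l * dist z w)
    (η : ℝ → ℝ → ℝ)
    (hη : ∀ r ε : ℝ, 0 < r → ε ∈ Set.Ioc (0:ℝ) 2 → η r ε ∈ Set.Ioc (0:ℝ) 1)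
    (hmod : ∀ r ε : ℝ, ∀ a u v : X, 0 < r → ε ∈ Set.Ioc (0:ℝ) 2 →
      dist u a ≤ r → dist v a ≤ r → ε * r ≤ dist u v →
      dist (W u v (1/2)) a ≤ (1 - η r ε) * r)
    : ∀ r ε l : ℝ, ∀ a u v : X, 0 < r → ε ∈ Set.Ioc (0:ℝ) 2 → l ∈ Set.Icc (0:ℝ) 1 →
      dist u a ≤ r → dist v a ≤ r → ε * r ≤ dist u v →
      dist (W u v l) a ≤ (1 - 2 * l * (1 - l) * η r ε) * r := by
  -- W(x,y,0) = x
  have hW0 : ∀ x y : X, W x y 0 = x := by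
    intro x y
    have h := W1 x y x 0 (by constructor <;> norm_num)
    simp only [dist_self] at h
    have : dist x (W x y 0) ≤ 0 := by linarith
    exact (eq_of_dist_eq_zero (le_antisymm this dist_nonneg)).symm
  -- uniqueness of points metrically between x and y at a given distance from x
  have uniq : ∀ x y p q : X, dist x p + dist p y = dist x y →
      dist x q + dist q y = dist x y → dist x p = dist x q → p = q := by
    intro x y p q hp hq hpq
    by_contra hne
    set R := dist x p with hR
    rcases eq_or_lt_of_le (dist_nonneg : (0:ℝ) ≤ R) with h0 | hRpos
    · have hp0 : dist x p = 0 := h0.symm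
      have hq0 : dist x q = 0 := by linarith [hpq]
      exact hne ((dist_eq_zero.mp hp0).symm.trans (dist_eq_zero.mp hq0))
    · set ε0 := dist p q / R with hε0
      have hε0pos : 0 < ε0 := div_pos (dist_pos.mpr hne) hRpos
      have hle2 : dist p q ≤ 2 * R := by
        calc dist p q ≤ dist p x + dist x q := dist_triangle p x q
        _ = 2 * R := by rw [dist_comm p x, ← hpq]; ring
      have hε0le : ε0 ≤ 2 := by
        rw [hε0, div_le_iff₀ hRpos]; linarith
      have hmid := hmod R ε0 x p q hRpos ⟨hε0pos, hε0le⟩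
        (by rw [dist_comm]) (by rw [dist_comm]; exact hpq.ge)
        (by rw [hε0, div_mul_cancel₀ _ (ne_of_gt hRpos)])
      have hηpos := (hη R ε0 hRpos ⟨hε0pos, hε0le⟩).1
      have hy := W1 p q y (1/2) (by constructor <;> norm_num)
      have hyp : dist y p = dist x y - R := by rw [dist_comm]; linarith
      have hyq : dist y q = dist x y - R := by rw [dist_comm]; linarith [hq, hpq]
      have htri := dist_triangle x (W p q (1/2)) y
      rw [dist_comm x (W p q (1/2))] at htri
      rw [hyp, hyq] at hy
      rw [dist_comm y (W p q (1/2))] at hy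
      nlinarith [hmid, hy, htri, hηpos, hRpos]
  intro r ε l a u v hr hε hl hu hv huv
  have hηmem := hη r ε hr hε
  -- key: the statement for l ≤ 1/2
  have key : ∀ l : ℝ, l ∈ Set.Icc (0:ℝ) 1 → l ≤ 1/2 → ∀ u v : X,
      dist u a ≤ r → dist v a ≤ r → ε * r ≤ dist u v →
      dist (W u v l) a ≤ (1 - 2 * l * (1 - l) * η r ε) * r := by
    intro l hl hl2 u v hu hv huv
    obtain ⟨hl0, hl1⟩ := hl
    have h2l : (2*l) ∈ Set.Icc (0:ℝ) 1 := ⟨by linarith, by linarith⟩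
    have hhalf : (1/2 : ℝ) ∈ Set.Icc (0:ℝ) 1 := by constructor <;> norm_num
    have h0 : (0:ℝ) ∈ Set.Icc (0:ℝ) 1 := by constructor <;> norm_num
    set m := W u v (1/2) with hm
    set d := dist u v with hd
    -- distances along the geodesic
    have hum : dist u m = (1/2) * d := by
      have := W2 u v (1/2) 0 hhalf h0
      rw [hW0] at this
      rw [dist_comm]; rw [this]; norm_num; rfl
    have hup : dist u (W u v l) = l * d := by
      have := W2 u v l 0 ⟨hl0, hl1⟩ h0
      rw [hW0] at this
      rw [dist_comm, this, sub_zero, abs_of_nonneg hl0]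
    have hpm : dist (W u v l) m = (1/2 - l) * d := by
      have := W2 u v l (1/2) ⟨hl0, hl1⟩ hhalf
      rw [this, abs_of_nonpos (by linarith : l - 1/2 ≤ 0)]
      ring_nf
      rfl
    have huq : dist u (W u m (2*l)) = l * d := by
      have := W2 u m (2*l) 0 h2l h0
      rw [hW0] at this
      rw [dist_comm, this, sub_zero, abs_of_nonneg (by linarith : (0:ℝ) ≤ 2*l), hum]
      ring
    have hqm : dist (W u m (2*l)) m = (1/2 - l) * d := by
      have h1 : (1:ℝ) ∈ Set.Icc (0:ℝ) 1 := by constructor <;> norm_num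
      have hW1' : W u m 1 = m := by
        have h3 := W1 u m m 1 h1
        simp only [dist_self] at h3
        have h4 : dist (W u m 1) m ≤ 0 := by rw [dist_comm]; linarith
        exact eq_of_dist_eq_zero (le_antisymm h4 dist_nonneg)
      have := W2 u m (2*l) 1 h2l (by constructor <;> norm_num)
      rw [hW1', hum] at this
      rw [this, abs_of_nonpos (by linarith : 2*l - 1 ≤ 0)]
      ring
    -- identify W u v l with W u m (2*l)
    have hident : W u v l = W u m (2*l) := by
      apply uniq u m
      · rw [hup, hpm, hum]; ring
      · rw [huq, hqm, hum]; ring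
      · rw [hup, huq]
    -- midpoint estimate
    have hmid := hmod r ε a u v hr hε hu hv huv
    have hconv := W1 u m a (2*l) h2l
    rw [← hident] at hconv
    rw [dist_comm a u, dist_comm a m] at hconv
    rw [dist_comm]
    calc dist a (W u v l) ≤ (1 - 2*l) * dist u a + (2*l) * dist m a := hconv
      _ ≤ (1 - 2*l) * r + (2*l) * ((1 - η r ε) * r) := by
          apply add_le_add
          · exact mul_le_mul_of_nonneg_left hu (by linarith)
          · exact mul_le_mul_of_nonneg_left hmid (by linarith)
      _ ≤ (1 - 2 * l * (1 - l) * η r ε) * r := by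
          nlinarith [mul_nonneg (mul_nonneg hl0 hl0) (mul_nonneg hηmem.1.le hr.le)]
  rcases le_or_gt l (1/2) with h | h
  · exact key l hl h u v hu hv huv
  · have h3 := W3 u v l hl
    rw [h3]
    have := key (1-l) ⟨by linarith [hl.2], by linarith [hl.1]⟩ (by linarith) v u hv hu
      (by rw [dist_comm]; exact huv)
    have hgoal := this
    calc dist (W v u (1-l)) a ≤ (1 - 2 * (1-l) * (1 - (1-l)) * η r ε) * r := hgoal
      _ = (1 - 2 * l * (1 - l) * η r ε) * r := by ring
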